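/- For n = 1, the set Q₁ of Γ₀(6)-equivalence classes of positive definite integral binary quadratic forms ax² + bxy + cy² of discriminant −23 with 6 | a, a > 0 and b ≡ 1 (mod 12) has exactly 3 elements, represented by 6x² + xy + y², 12x² + 13xy + 4y², and 18x² + 25xy + 9y². -/
import Mathlib


/-- The action of a matrix `(p q; r s)` on a binary quadratic form `[a,b,c]` by linear
substitution of variables: `(Q∘γ)(x,y) = Q(px + qy, rx + sy)`. -/
def qfAct (γ : Matrix (Fin 2) (Fin 2) ℤ) (f : ℤ × ℤ × ℤ) : ℤ × ℤ × ℤ :=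
  ⟨f.1 * (γ 0 0) ^ 2 + f.2.1 * γ 0 0 * γ 1 0 + f.2.2 * (γ 1 0) ^ 2,
   2 * f.1 * γ 0 0 * γ 0 1 + f.2.1 * (γ 0 0 * γ 1 1 + γ 0 1 * γ 1 0) + 2 * f.2.2 * γ 1 0 * γ 1 1,
   f.1 * (γ 0 1) ^ 2 + f.2.1 * γ 0 1 * γ 1 1 + f.2.2 * (γ 1 1) ^ 2⟩

/-- `Γ₀(N)`-equivalence of integral binary quadratic forms `[a,b,c]`. -/
def Gamma0Equiv (N : ℕ) (f g : ℤ × ℤ × ℤ) : Prop :=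
  ∃ γ : Matrix.SpecialLinearGroup (Fin 2) ℤ,
    (N : ℤ) ∣ (γ : Matrix (Fin 2) (Fin 2) ℤ) 1 0 ∧ qfAct γ f = g

/-- Membership in the set `Q₁`: positive definite forms of discriminant `−23` with `6 ∣ a`,
`a > 0` and `b ≡ 1 (mod 12)`. -/
def InQ1 (f : ℤ × ℤ × ℤ) : Prop :=
  f.2.1 ^ 2 - 4 * f.1 * f.2.2 = -23 ∧ 0 < f.1 ∧ (6 : ℤ) ∣ f.1 ∧ f.2.1 ≡ 1 [ZMOD 12]

abbrev SL2 := Matrix.SpecialLinearGroup (Fin 2) ℤ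

def SLE (f g : ℤ × ℤ × ℤ) : Prop := ∃ γ : SL2, qfAct γ f = g

lemma qfAct_mul (A B : Matrix (Fin 2) (Fin 2) ℤ) (f : ℤ × ℤ × ℤ) :
    qfAct (A * B) f = qfAct B (qfAct A f) := by
  simp only [qfAct, Matrix.mul_apply, Fin.sum_univ_two]
  refine Prod.ext ?_ (Prod.ext ?_ ?_) <;> ring

lemma qfAct_one (f : ℤ × ℤ × ℤ) : qfAct 1 f = f := by
  simp [qfAct, Matrix.one_apply]

lemma SLE_refl (f : ℤ × ℤ × ℤ) : SLE f f := ⟨1, by simpa using qfAct_one f⟩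

lemma SLE_trans {f g h : ℤ × ℤ × ℤ} (h1 : SLE f g) (h2 : SLE g h) : SLE f h := by
  obtain ⟨γ, rfl⟩ := h1; obtain ⟨δ, rfl⟩ := h2
  exact ⟨γ * δ, by rw [Matrix.SpecialLinearGroup.coe_mul, qfAct_mul]⟩

lemma SLE_symm {f g : ℤ × ℤ × ℤ} (h1 : SLE f g) : SLE g f := by
  obtain ⟨γ, rfl⟩ := h1
  refine ⟨γ⁻¹, ?_⟩
  rw [← qfAct_mul, ← Matrix.SpecialLinearGroup.coe_mul, mul_inv_cancel,
    Matrix.SpecialLinearGroup.coe_one, qfAct_one]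

lemma SLE_T (a b c q : ℤ) : SLE (a,b,c) (a, 2*a*q + b, a*q^2 + b*q + c) := by
  refine ⟨⟨!![1,q;0,1], by simp [Matrix.det_fin_two_of]⟩, ?_⟩
  simp only [qfAct, Matrix.SpecialLinearGroup.coe_mk]
  norm_num [Matrix.cons_val_zero, Matrix.cons_val_one, Matrix.head_cons]


lemma SLE_S (a b c : ℤ) : SLE (a,b,c) (c,-b,a) := by
  refine ⟨⟨!![0,-1;1,0], by simp [Matrix.det_fin_two_of]⟩, ?_⟩
  simp only [qfAct, Matrix.SpecialLinearGroup.coe_mk]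
  norm_num [Matrix.cons_val_zero, Matrix.cons_val_one, Matrix.head_cons]


lemma reduced_case (a b c : ℤ) (ha : 0 < a) (ha2 : a ≤ 2) (hb1 : -a ≤ b) (hb2 : b < a)
    (hd : b^2 - 4*a*c = -23) :
    SLE (a,b,c) (1,1,6) ∨ SLE (a,b,c) (2,1,3) ∨ SLE (a,b,c) (2,-1,3) := by
  interval_cases a
  · interval_cases b
    · have hc : c = 6 := by omega
      subst hc
      left
      have h := SLE_T 1 (-1) 6 1
      norm_num at h
      exact h
    · omega
  · interval_cases b
    · omega
    · have hc : c = 3 := by omega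
      subst hc
      right; right; exact SLE_refl _
    · omega
    · have hc : c = 3 := by omega
      subst hc
      right; left; exact SLE_refl _

lemma reduce : ∀ n : ℕ, ∀ a b c : ℤ, a.natAbs ≤ n → 0 < a → b^2 - 4*a*c = -23 →
    SLE (a,b,c) (1,1,6) ∨ SLE (a,b,c) (2,1,3) ∨ SLE (a,b,c) (2,-1,3) := by
  intro n
  induction n with
  | zero => intro a b c hn ha _; omega
  | succ n ih =>
    intro a b c hn ha hd
    have hane : (2*a) ≠ 0 := by omega
    have he := Int.mul_ediv_add_emod (b + a) (2*a)
    have h0 := Int.emod_nonneg (b + a) hane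
    have h1 := Int.emod_lt_of_pos (b + a) (show (0:ℤ) < 2*a by omega)
    set q : ℤ := -((b + a) / (2*a)) with hqdef
    have hT := SLE_T a b c q
    set b' : ℤ := 2*a*q + b with hb'def
    set c' : ℤ := a*q^2 + b*q + c with hc'def
    have hb'lb : -a ≤ b' := by rw [hb'def, hqdef]; linarith
    have hb'ub : b' < a := by rw [hb'def, hqdef]; linarith
    have hd' : b'^2 - 4*a*c' = -23 := by
      rw [hb'def, hc'def]; linear_combination hd
    have hcpos : 0 < c' := by nlinarith [sq_nonneg b']
    by_cases hca : c' < a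
    · have hS := SLE_S a b' c'
      have hd'' : (-b')^2 - 4*c'*a = -23 := by linear_combination hd'
      have hrec := ih c' (-b') a (by omega) hcpos hd''
      have hfront : SLE (a,b,c) (c', -b', a) := SLE_trans hT hS
      rcases hrec with h|h|h
      · exact Or.inl (SLE_trans hfront h)
      · exact Or.inr (Or.inl (SLE_trans hfront h))
      · exact Or.inr (Or.inr (SLE_trans hfront h))
    · push_neg at hca
      have ha2 : a ≤ 2 := by
        nlinarith [mul_nonneg (sub_nonneg.2 hca) ha.le,
          mul_nonneg (by linarith : (0:ℤ) ≤ a - b') (by linarith : (0:ℤ) ≤ a + b'),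
          sq_nonneg (a - 3), sq_nonneg (a + 3)]
      have hred := reduced_case a b' c' ha ha2 hb'lb hb'ub hd'
      rcases hred with h|h|h
      · exact Or.inl (SLE_trans hT h)
      · exact Or.inr (Or.inl (SLE_trans hT h))
      · exact Or.inr (Or.inr (SLE_trans hT h))

lemma tgt1 : SLE (6,1,1) (1,1,6) := by
  have h1 := SLE_S 6 1 1
  have h2 := SLE_T 1 (-1) 6 1
  norm_num at h2
  exact SLE_trans h1 h2

lemma tgt2 : SLE (12,13,4) (2,1,3) := by
  have h1 := SLE_T 12 13 4 (-1)
  have h2 := SLE_S 12 (-11) 3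
  have h3 := SLE_T 3 11 12 (-2)
  have h4 := SLE_S 3 (-1) 2
  norm_num at h1 h2 h3 h4
  exact SLE_trans (SLE_trans (SLE_trans h1 h2) h3) h4

lemma tgt3 : SLE (18,25,9) (2,-1,3) := by
  have h1 := SLE_T 18 25 9 (-1)
  have h2 := SLE_S 18 (-11) 2
  have h3 := SLE_T 2 11 18 (-3)
  norm_num at h1 h2 h3
  exact SLE_trans (SLE_trans h1 h2) h3

lemma zmod6_key : ∀ p q r s c : ZMod 6,
    p*s - q*r = 1 → r*(p+c*r) = 0 → r*(q+c*s) = 0 → r = 0 := by decide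

lemma key {f g : ℤ × ℤ × ℤ} (hf : InQ1 f) (hg : InQ1 g) (γ : SL2) (h : qfAct γ f = g) :
    (6:ℤ) ∣ (γ : Matrix (Fin 2) (Fin 2) ℤ) 1 0 := by
  obtain ⟨a, b, c⟩ := f
  obtain ⟨a', b', c'⟩ := g
  simp only [InQ1] at hf hg
  obtain ⟨hdf, haf, ⟨A, hA⟩, hbf⟩ := hf
  obtain ⟨hdg, hag, ⟨A', hA'⟩, hbg⟩ := hg
  set p := (γ : Matrix (Fin 2) (Fin 2) ℤ) 0 0 with hp
  set q := (γ : Matrix (Fin 2) (Fin 2) ℤ) 0 1 with hqq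
  set r := (γ : Matrix (Fin 2) (Fin 2) ℤ) 1 0 with hr
  set s := (γ : Matrix (Fin 2) (Fin 2) ℤ) 1 1 with hs
  have hdet : p*s - q*r = 1 := by
    have := γ.2
    rwa [Matrix.det_fin_two] at this
  simp only [qfAct, Prod.mk.injEq] at h
  obtain ⟨e1, e2, _⟩ := h
  obtain ⟨m, hm⟩ := Int.modEq_iff_dvd.1 hbf
  obtain ⟨m', hm'⟩ := Int.modEq_iff_dvd.1 hbg
  have hb : b = 1 - 12*m := by omega
  have hb' : b' = 1 - 12*m' := by omega
  have h1 : (6:ℤ) ∣ r*(p + c*r) :=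
    ⟨A' - A*p^2 + 2*m*p*r, by linear_combination e1 - p^2*hA + hA' - p*r*hb⟩
  have h2 : (6:ℤ) ∣ r*(q + c*s) := by
    have h2' : 2*(r*(q+c*s)) = 12*(-(A*p*q) + m*(p*s+q*r) - m') := by
      linear_combination e2 - 2*p*q*hA - (p*s+q*r)*hb + hb' - hdet
    exact ⟨-(A*p*q) + m*(p*s+q*r) - m', by omega⟩
  have hz := zmod6_key (p : ZMod 6) q r s c
    (by exact_mod_cast congrArg (Int.cast : ℤ → ZMod 6) hdet)
    (by
      have := (ZMod.intCast_zmod_eq_zero_iff_dvd (r*(p + c*r)) 6).2 h1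
      push_cast at this
      exact this)
    (by
      have := (ZMod.intCast_zmod_eq_zero_iff_dvd (r*(q + c*s)) 6).2 h2
      push_cast at this
      exact this)
  exact (ZMod.intCast_zmod_eq_zero_iff_dvd r 6).1 hz

lemma neq12 : ¬ Gamma0Equiv 6 (6,1,1) (12,13,4) := by
  rintro ⟨γ, -, h⟩
  set p := (γ : Matrix (Fin 2) (Fin 2) ℤ) 0 0 with hp
  set q := (γ : Matrix (Fin 2) (Fin 2) ℤ) 0 1 with hqq
  set r := (γ : Matrix (Fin 2) (Fin 2) ℤ) 1 0 with hr
  set s := (γ : Matrix (Fin 2) (Fin 2) ℤ) 1 1 with hs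
  have hdet : p*s - q*r = 1 := by have := γ.2; rwa [Matrix.det_fin_two] at this
  simp only [qfAct, Prod.mk.injEq] at h
  obtain ⟨e1, e2, -⟩ := h
  have E1 : 6*(p*p) + p*r + r*r = 12 := by linear_combination e1
  have E2 : 12*(p*q) + (p*s + q*r) + 2*(r*s) = 13 := by linear_combination e2
  have hr1 : r*r ≤ 12 := by nlinarith [sq_nonneg (12*p + r)]
  have hrb : -3 ≤ r ∧ r ≤ 3 := ⟨by nlinarith [hr1], by nlinarith [hr1]⟩
  have hp1 : p*p ≤ 4 := by
    nlinarith [sq_nonneg (12*p + r), sq_nonneg (12*p - r), sq_nonneg r]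
  have hpb : -2 ≤ p ∧ p ≤ 2 := ⟨by nlinarith [hp1], by nlinarith [hp1]⟩
  obtain ⟨hr2, hr3⟩ := hrb
  obtain ⟨hp2, hp3⟩ := hpb
  clear_value p q r s
  interval_cases p <;> interval_cases r <;> omega

lemma neq13 : ¬ Gamma0Equiv 6 (6,1,1) (18,25,9) := by
  rintro ⟨γ, -, h⟩
  set p := (γ : Matrix (Fin 2) (Fin 2) ℤ) 0 0 with hp
  set q := (γ : Matrix (Fin 2) (Fin 2) ℤ) 0 1 with hqq
  set r := (γ : Matrix (Fin 2) (Fin 2) ℤ) 1 0 with hr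
  set s := (γ : Matrix (Fin 2) (Fin 2) ℤ) 1 1 with hs
  have hdet : p*s - q*r = 1 := by have := γ.2; rwa [Matrix.det_fin_two] at this
  simp only [qfAct, Prod.mk.injEq] at h
  obtain ⟨e1, e2, -⟩ := h
  have E1 : 6*(p*p) + p*r + r*r = 18 := by linear_combination e1
  have E2 : 12*(p*q) + (p*s + q*r) + 2*(r*s) = 25 := by linear_combination e2
  have hr1 : r*r ≤ 18 := by nlinarith [sq_nonneg (12*p + r)]
  have hrb : -4 ≤ r ∧ r ≤ 4 := ⟨by nlinarith [hr1], by nlinarith [hr1]⟩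
  have hp1 : p*p ≤ 6 := by
    nlinarith [sq_nonneg (12*p + r), sq_nonneg (12*p - r), sq_nonneg r]
  have hpb : -2 ≤ p ∧ p ≤ 2 := ⟨by nlinarith [hp1], by nlinarith [hp1]⟩
  obtain ⟨hr2, hr3⟩ := hrb
  obtain ⟨hp2, hp3⟩ := hpb
  clear_value p q r s
  interval_cases p <;> interval_cases r <;> omega

lemma neq23 : ¬ Gamma0Equiv 6 (12,13,4) (18,25,9) := by
  rintro ⟨γ, -, h⟩
  set p := (γ : Matrix (Fin 2) (Fin 2) ℤ) 0 0 with hp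
  set q := (γ : Matrix (Fin 2) (Fin 2) ℤ) 0 1 with hqq
  set r := (γ : Matrix (Fin 2) (Fin 2) ℤ) 1 0 with hr
  set s := (γ : Matrix (Fin 2) (Fin 2) ℤ) 1 1 with hs
  have hdet : p*s - q*r = 1 := by have := γ.2; rwa [Matrix.det_fin_two] at this
  simp only [qfAct, Prod.mk.injEq] at h
  obtain ⟨e1, e2, -⟩ := h
  have E1 : 12*(p*p) + 13*(p*r) + 4*(r*r) = 18 := by linear_combination e1
  have E2 : 24*(p*q) + 13*(p*s + q*r) + 8*(r*s) = 25 := by linear_combination e2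
  have hr1 : 23*(r*r) ≤ 864 := by nlinarith [sq_nonneg (24*p + 13*r)]
  have hrb : -6 ≤ r ∧ r ≤ 6 := ⟨by nlinarith [hr1], by nlinarith [hr1]⟩
  have hp1 : p*p ≤ 24 := by
    nlinarith [sq_nonneg (24*p + 13*r), sq_nonneg (24*p - 13*r), sq_nonneg r, hr1]
  have hpb : -4 ≤ p ∧ p ≤ 4 := ⟨by nlinarith [hp1], by nlinarith [hp1]⟩
  obtain ⟨hr2, hr3⟩ := hrb
  obtain ⟨hp2, hp3⟩ := hpb
  clear_value p q r s
  interval_cases p <;> interval_cases r <;> omega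

lemma q1a : InQ1 (6,1,1) := ⟨by norm_num, by norm_num, by norm_num, by decide⟩
lemma q1b : InQ1 (12,13,4) := ⟨by norm_num, by norm_num, by norm_num, by decide⟩
lemma q1c : InQ1 (18,25,9) := ⟨by norm_num, by norm_num, by norm_num, by decide⟩

lemma complete (f : ℤ × ℤ × ℤ) (hf : InQ1 f) :
    Gamma0Equiv 6 f (6,1,1) ∨ Gamma0Equiv 6 f (12,13,4) ∨ Gamma0Equiv 6 f (18,25,9) := by
  obtain ⟨a, b, c⟩ := f
  obtain ⟨hd, ha, -, -⟩ := id hf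
  have hd' : b^2 - 4*a*c = -23 := hd
  have ha' : 0 < a := ha
  have hred := reduce a.natAbs a b c le_rfl ha' hd'
  rcases hred with h|h|h
  · left
    obtain ⟨γ, hγ⟩ := SLE_trans h (SLE_symm tgt1)
    exact ⟨γ, key hf q1a γ hγ, hγ⟩
  · right; left
    obtain ⟨γ, hγ⟩ := SLE_trans h (SLE_symm tgt2)
    exact ⟨γ, key hf q1b γ hγ, hγ⟩
  · right; right
    obtain ⟨γ, hγ⟩ := SLE_trans h (SLE_symm tgt3)
    exact ⟨γ, key hf q1c γ hγ, hγ⟩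

/-- `Q₁` has exactly 3 classes, represented by `6x² + xy + y²`, `12x² + 13xy + 4y²`,
`18x² + 25xy + 9y²`. -/
theorem Q1_has_three_classes :
    InQ1 (6, 1, 1) ∧ InQ1 (12, 13, 4) ∧ InQ1 (18, 25, 9) ∧
    ¬ Gamma0Equiv 6 (6, 1, 1) (12, 13, 4) ∧
    ¬ Gamma0Equiv 6 (6, 1, 1) (18, 25, 9) ∧
    ¬ Gamma0Equiv 6 (12, 13, 4) (18, 25, 9) ∧
    (∀ f : ℤ × ℤ × ℤ, InQ1 f →
      Gamma0Equiv 6 f (6, 1, 1) ∨ Gamma0Equiv 6 f (12, 13, 4) ∨ Gamma0Equiv 6 f (18, 25, 9)) :=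
  ⟨q1a, q1b, q1c, neq12, neq13, neq23, complete⟩
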